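/- The quotient algebra MvPolynomial (Fin n) (ZMod 2) ⧸ I₁(L) is a finite-dimensional vector space over ZMod 2, and its dimension equals the number of cosets Nat.card (G ⧸ L), where I₁(L) is the ideal generated by {X^{lift(c)} − 1 : c ∈ L} ∪ {X_i^{g i} − 1 : i ∈ Fin n}. -/

import Mathlib

open MvPolynomial

/-- The ideal `I₁(L)` generated by `{X^(lift c) - 1 : c ∈ L} ∪ {X i ^ g i - 1 : i}`
in `MvPolynomial (Fin n) (ZMod 2)`. -/
noncomputable def latticeIdeal (n : ℕ) (g : Fin n → ℕ)
    (L : AddSubgroup (∀ i, ZMod (g i))) : Ideal (MvPolynomial (Fin n) (ZMod 2)) :=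
  Ideal.span
    ({ p : MvPolynomial (Fin n) (ZMod 2) |
        ∃ c ∈ L, p = monomial
          (Finsupp.equivFunOnFinite.symm fun i => (c i).val) (1 : ZMod 2) - 1 } ∪
     { p : MvPolynomial (Fin n) (ZMod 2) |
        ∃ i : Fin n, p = X i ^ g i - 1 })

namespace Stmt10Aux

variable {n : ℕ} {g : Fin n → ℕ}

lemma prod_single {ι G : Type*} [AddCommMonoid G] (s : Finset ι) (a : ι → G) :
    (∏ i ∈ s, AddMonoidAlgebra.single (a i) (1 : ZMod 2)) =
      AddMonoidAlgebra.single (∑ i ∈ s, a i) 1 := by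
  classical
  induction s using Finset.cons_induction with
  | empty => simp [AddMonoidAlgebra.one_def]
  | cons i s hi ih =>
    rw [Finset.prod_cons, Finset.sum_cons, ih, AddMonoidAlgebra.single_mul_single, one_mul]

variable (g) in
/-- The algebra map `φ : R → (ZMod 2)[G ⧸ L]`, sending `X i` to the class of `eᵢ`. -/
noncomputable def phi (L : AddSubgroup (∀ i, ZMod (g i))) :
    MvPolynomial (Fin n) (ZMod 2) →ₐ[ZMod 2]
      AddMonoidAlgebra (ZMod 2) ((∀ i, ZMod (g i)) ⧸ L) :=
  aeval fun i =>
    AddMonoidAlgebra.single ((QuotientAddGroup.mk (Pi.single i 1)) : (∀ i, ZMod (g i)) ⧸ L) 1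

lemma sum_smul_single (u : Fin n → ℕ) :
    (∑ i, u i • Pi.single i (1 : ZMod (g i))) = fun j => ((u j : ℕ) : ZMod (g j)) := by
  funext j
  rw [Finset.sum_apply, Finset.sum_eq_single_of_mem j (Finset.mem_univ j)]
  · rw [Pi.smul_apply, Pi.single_eq_same, nsmul_eq_mul, mul_one]
  · intro i _ hij
    rw [Pi.smul_apply, Pi.single_eq_of_ne (Ne.symm hij), smul_zero]

lemma phi_monomial (L : AddSubgroup (∀ i, ZMod (g i))) (u : Fin n → ℕ) :
    phi g L (monomial (Finsupp.equivFunOnFinite.symm u) 1) =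
      AddMonoidAlgebra.single
        ((QuotientAddGroup.mk fun j => ((u j : ℕ) : ZMod (g j))) : (∀ i, ZMod (g i)) ⧸ L) 1 := by
  rw [monomial_eq, C_1, one_mul, Finsupp.prod_fintype _ _ (fun i => pow_zero _)]
  simp only [Finsupp.coe_equivFunOnFinite_symm]
  rw [map_prod]
  simp only [map_pow, phi, aeval_X, AddMonoidAlgebra.single_pow, one_pow]
  rw [prod_single]
  congr 1
  have : (∑ i, u i • ((QuotientAddGroup.mk (Pi.single i 1)) : (∀ i, ZMod (g i)) ⧸ L)) =
      QuotientAddGroup.mk' L (∑ i, u i • Pi.single i 1) := by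
    rw [map_sum]
    simp only [map_nsmul]
    rfl
  rw [this, sum_smul_single]
  rfl

/-- monomials whose exponents agree mod `g` are congruent mod the lattice ideal -/
lemma mk_monomial_congr (L : AddSubgroup (∀ i, ZMod (g i))) (d₁ d₂ : Fin n →₀ ℕ)
    (h : ∀ i, ((d₁ i : ℕ) : ZMod (g i)) = ((d₂ i : ℕ) : ZMod (g i))) :
    Ideal.Quotient.mk (latticeIdeal n g L) (monomial d₁ 1) =
      Ideal.Quotient.mk (latticeIdeal n g L) (monomial d₂ 1) := by
  have hx : ∀ i, (Ideal.Quotient.mk (latticeIdeal n g L) (X i)) ^ (g i) = 1 := by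
    intro i
    rw [← map_pow, ← map_one (Ideal.Quotient.mk (latticeIdeal n g L)),
      Ideal.Quotient.mk_eq_mk_iff_sub_mem]
    exact Ideal.subset_span (Or.inr ⟨i, rfl⟩)
  have key : ∀ d : Fin n →₀ ℕ, Ideal.Quotient.mk (latticeIdeal n g L) (monomial d 1) =
      ∏ i, (Ideal.Quotient.mk (latticeIdeal n g L) (X i)) ^ (d i % g i) := by
    intro d
    rw [monomial_eq, C_1, one_mul, Finsupp.prod_fintype _ _ (fun i => pow_zero _), map_prod]
    exact Finset.prod_congr rfl fun i _ => by rw [map_pow, pow_eq_pow_mod _ (hx i)]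
  rw [key d₁, key d₂]
  refine Finset.prod_congr rfl fun i _ => ?_
  rw [(ZMod.natCast_eq_natCast_iff' _ _ _).mp (h i)]

/-- `lift` of an element with casts back -/
lemma cast_val (hg : ∀ i, 1 ≤ g i) (c : ∀ i, ZMod (g i)) :
    (fun j => (((c j).val : ℕ) : ZMod (g j))) = c := by
  haveI : ∀ i, NeZero (g i) := fun i => ⟨by have := hg i; omega⟩
  funext j
  simp [ZMod.natCast_val, ZMod.cast_id]

lemma phi_vanish (hg : ∀ i, 1 ≤ g i) (L : AddSubgroup (∀ i, ZMod (g i))) :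
    ∀ p ∈ latticeIdeal n g L, phi g L p = 0 := by
  haveI : ∀ i, NeZero (g i) := fun i => ⟨by have := hg i; omega⟩
  intro p hp
  have hle : latticeIdeal n g L ≤ RingHom.ker (phi g L) := by
    rw [latticeIdeal, Ideal.span_le]
    rintro q (⟨c, hc, rfl⟩ | ⟨i, rfl⟩) <;> simp only [SetLike.mem_coe, RingHom.mem_ker, map_sub,
      map_one, map_pow, sub_eq_zero]
    · rw [phi_monomial, cast_val hg]
      rw [show ((QuotientAddGroup.mk c : (∀ i, ZMod (g i)) ⧸ L)) = 0 from
        (QuotientAddGroup.eq_zero_iff c).mpr hc]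
      exact AddMonoidAlgebra.one_def.symm
    · rw [phi, aeval_X, AddMonoidAlgebra.single_pow, one_pow]
      have hz : (g i) • (Pi.single i (1 : ZMod (g i)) : ∀ j, ZMod (g j)) = 0 := by
        funext j
        rcases eq_or_ne j i with rfl | hj
        · simp [nsmul_eq_mul, ZMod.natCast_self]
        · simp [Pi.single_eq_of_ne hj]
      have h2 : (g i) • ((QuotientAddGroup.mk (Pi.single i 1)) : (∀ i, ZMod (g i)) ⧸ L) = 0 := by
        show (g i) • (QuotientAddGroup.mk' L (Pi.single i 1)) = 0
        rw [← map_nsmul, hz, map_zero]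
      rw [h2]
      exact AddMonoidAlgebra.one_def.symm
  exact hle hp

/-- `e c`, the monomial with exponent vector `lift c`. -/
noncomputable def eMon (c : ∀ i, ZMod (g i)) : MvPolynomial (Fin n) (ZMod 2) :=
  monomial (Finsupp.equivFunOnFinite.symm fun i => (c i).val) (1 : ZMod 2)

lemma mk_eMon_mul (hg : ∀ i, 1 ≤ g i) (L : AddSubgroup (∀ i, ZMod (g i)))
    (c d : ∀ i, ZMod (g i)) :
    Ideal.Quotient.mk (latticeIdeal n g L) (eMon (c + d)) =
      Ideal.Quotient.mk (latticeIdeal n g L) (eMon c) *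
      Ideal.Quotient.mk (latticeIdeal n g L) (eMon d) := by
  haveI : ∀ i, NeZero (g i) := fun i => ⟨by have := hg i; omega⟩
  rw [← map_mul, eMon, eMon, eMon, monomial_mul, one_mul]
  apply mk_monomial_congr
  intro i
  simp only [Finsupp.coe_equivFunOnFinite_symm, Finsupp.add_apply, Nat.cast_add]
  simp [ZMod.natCast_val, ZMod.cast_id]

lemma mk_eMon_of_mem (L : AddSubgroup (∀ i, ZMod (g i))) {c : ∀ i, ZMod (g i)} (hc : c ∈ L) :
    Ideal.Quotient.mk (latticeIdeal n g L) (eMon c) = 1 := by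
  rw [← map_one (Ideal.Quotient.mk (latticeIdeal n g L)),
    Ideal.Quotient.mk_eq_mk_iff_sub_mem]
  exact Ideal.subset_span (Or.inl ⟨c, hc, rfl⟩)

lemma mk_eMon_congr (hg : ∀ i, 1 ≤ g i) (L : AddSubgroup (∀ i, ZMod (g i)))
    {c d : ∀ i, ZMod (g i)}
    (h : (QuotientAddGroup.mk c : (∀ i, ZMod (g i)) ⧸ L) = QuotientAddGroup.mk d) :
    Ideal.Quotient.mk (latticeIdeal n g L) (eMon c) =
      Ideal.Quotient.mk (latticeIdeal n g L) (eMon d) := by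
  have hmem : -c + d ∈ L := by
    rw [QuotientAddGroup.eq] at h
    exact h
  rw [show d = c + (-c + d) by abel, mk_eMon_mul hg L, mk_eMon_of_mem L hmem, mul_one]

lemma eMon_zero (hg : ∀ i, 1 ≤ g i) (L : AddSubgroup (∀ i, ZMod (g i))) :
    Ideal.Quotient.mk (latticeIdeal n g L) (eMon (0 : ∀ i, ZMod (g i))) = 1 :=
  mk_eMon_of_mem L (zero_mem L)

variable (g) in
/-- The monoid hom `Multiplicative (G ⧸ L) →* R ⧸ I₁(L)`. -/
noncomputable def fHom (hg : ∀ i, 1 ≤ g i) (L : AddSubgroup (∀ i, ZMod (g i))) :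
    Multiplicative ((∀ i, ZMod (g i)) ⧸ L) →*
      (MvPolynomial (Fin n) (ZMod 2) ⧸ latticeIdeal n g L) where
  toFun q := Ideal.Quotient.mk (latticeIdeal n g L) (eMon (Quotient.out (Multiplicative.toAdd q)))
  map_one' := by
    show Ideal.Quotient.mk (latticeIdeal n g L)
      (eMon (Quotient.out (0 : (∀ i, ZMod (g i)) ⧸ L))) = 1
    rw [mk_eMon_congr hg L (by rw [QuotientAddGroup.out_eq'] :
      (QuotientAddGroup.mk (Quotient.out (0 : (∀ i, ZMod (g i)) ⧸ L)) :
        (∀ i, ZMod (g i)) ⧸ L) = ((0 : (∀ i, ZMod (g i)) ⧸ L)))]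
    exact eMon_zero hg L
  map_mul' a b := by
    have h : (QuotientAddGroup.mk (Quotient.out (Multiplicative.toAdd a +
        Multiplicative.toAdd b)) : (∀ i, ZMod (g i)) ⧸ L) =
        QuotientAddGroup.mk (Quotient.out (Multiplicative.toAdd a) +
          Quotient.out (Multiplicative.toAdd b)) := by
      rw [QuotientAddGroup.out_eq', QuotientAddGroup.mk_add,
        QuotientAddGroup.out_eq', QuotientAddGroup.out_eq']
    show Ideal.Quotient.mk (latticeIdeal n g L)
        (eMon (Quotient.out (Multiplicative.toAdd a + Multiplicative.toAdd b))) = _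
    rw [mk_eMon_congr hg L h, mk_eMon_mul hg L]

end Stmt10Aux

open Stmt10Aux in
/-- The quotient algebra `MvPolynomial (Fin n) (ZMod 2) ⧸ I₁(L)`
is a finite-dimensional `ZMod 2`-vector space of dimension `Nat.card (G ⧸ L)`. -/
theorem stmt_10 (n : ℕ) (g : Fin n → ℕ) (hg : ∀ i, 1 ≤ g i)
    (L : AddSubgroup (∀ i, ZMod (g i))) :
    FiniteDimensional (ZMod 2) (MvPolynomial (Fin n) (ZMod 2) ⧸ latticeIdeal n g L) ∧
    Module.finrank (ZMod 2) (MvPolynomial (Fin n) (ZMod 2) ⧸ latticeIdeal n g L) =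
      Nat.card ((∀ i, ZMod (g i)) ⧸ L) := by
  haveI : ∀ i, NeZero (g i) := fun i => ⟨by have := hg i; omega⟩
  set Q := (∀ i, ZMod (g i)) ⧸ L with hQ
  set A := AddMonoidAlgebra (ZMod 2) Q with hA
  set I := latticeIdeal n g L with hI
  -- the two algebra maps
  let phibar : (MvPolynomial (Fin n) (ZMod 2) ⧸ I) →ₐ[ZMod 2] A :=
    Ideal.Quotient.liftₐ I (phi g L) (phi_vanish hg L)
  let psi : A →ₐ[ZMod 2] (MvPolynomial (Fin n) (ZMod 2) ⧸ I) :=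
    AddMonoidAlgebra.lift (ZMod 2) _ Q (fHom g hg L)
  have hphibar_mk : ∀ p, phibar (Ideal.Quotient.mk I p) = phi g L p := fun p => rfl
  have hpsi_single : ∀ q : Q, psi (AddMonoidAlgebra.single q 1) =
      Ideal.Quotient.mk I (eMon (Quotient.out q)) := by
    intro q
    rw [show (AddMonoidAlgebra.single q (1 : ZMod 2)) = AddMonoidAlgebra.single q 1 from rfl]
    rw [AddMonoidAlgebra.lift_single, one_smul]
    rfl
  have hphibar_eMon : ∀ c : ∀ i, ZMod (g i), phibar (Ideal.Quotient.mk I (eMon c)) =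
      AddMonoidAlgebra.single ((QuotientAddGroup.mk c : Q)) 1 := by
    intro c
    rw [hphibar_mk, eMon, phi_monomial, cast_val hg]
  -- first composition
  have h1 : phibar.comp psi = AlgHom.id (ZMod 2) A := by
    apply AddMonoidAlgebra.algHom_ext
    intro q
    rw [AlgHom.comp_apply, hpsi_single, hphibar_eMon, AlgHom.id_apply,
      QuotientAddGroup.out_eq']
    exact Subsingleton.elim _ _
  -- second composition
  have h2 : psi.comp phibar = AlgHom.id (ZMod 2) (MvPolynomial (Fin n) (ZMod 2) ⧸ I) := by
    apply Ideal.Quotient.algHom_ext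
    apply MvPolynomial.algHom_ext
    intro i
    rw [AlgHom.comp_apply, AlgHom.comp_apply, Ideal.Quotient.mkₐ_eq_mk]
    rw [hphibar_mk, phi, aeval_X, hpsi_single, AlgHom.comp_apply, Ideal.Quotient.mkₐ_eq_mk]
    rw [AlgHom.id_apply]
    rw [mk_eMon_congr hg L (QuotientAddGroup.out_eq' _ :
      (QuotientAddGroup.mk (Quotient.out
        ((QuotientAddGroup.mk (Pi.single i 1)) : Q)) : Q) = QuotientAddGroup.mk (Pi.single i 1))]
    rw [show (X i : MvPolynomial (Fin n) (ZMod 2)) = monomial (Finsupp.single i 1) 1 from rfl]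
    apply mk_monomial_congr
    intro j
    simp only [Finsupp.coe_equivFunOnFinite_symm, Finsupp.single_apply]
    rcases eq_or_ne j i with rfl | hj
    · simp [ZMod.natCast_val, ZMod.cast_id]
    · simp [Pi.single_eq_of_ne hj, (Ne.symm hj : ¬ i = j)]
  let E : (MvPolynomial (Fin n) (ZMod 2) ⧸ I) ≃ₐ[ZMod 2] A :=
    AlgEquiv.ofAlgHom phibar psi h1 h2
  -- finiteness of Q
  haveI : Finite Q := Quotient.finite _
  haveI : Fintype Q := Fintype.ofFinite Q
  -- basis of A
  let b : Module.Basis Q (ZMod 2) A := AddMonoidAlgebra.basis Q (ZMod 2)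
  haveI hfdA : FiniteDimensional (ZMod 2) A := Module.Finite.of_basis b
  have hrankA : Module.finrank (ZMod 2) A = Fintype.card Q :=
    Module.finrank_eq_card_basis b
  haveI hfd : FiniteDimensional (ZMod 2) (MvPolynomial (Fin n) (ZMod 2) ⧸ I) :=
    Module.Finite.equiv E.symm.toLinearEquiv
  refine ⟨hfd, ?_⟩
  rw [E.toLinearEquiv.finrank_eq, hrankA, Nat.card_eq_fintype_card]
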